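/- Let Q_1,Q_2,Q_3,Q_4 ≥ 0 with Q_1+Q_2+Q_3+Q_4 = 1 and let q_0, q_1 be probability vectors on a finite alphabet. Then H((Q_1+Q_2)q_0 + (Q_3+Q_4)q_1) + H((Q_1+Q_3)q_0 + (Q_2+Q_4)q_1) ≥ H(Q_1 q_0 + (Q_2+Q_3+Q_4)q_1) + H((Q_1+Q_2+Q_3)q_0 + Q_4 q_1). -/

import Mathlib

/-- Shannon entropy (base 2) of a vector of probabilities. -/
noncomputable def ent {J : ℕ} (p : Fin J → ℝ) : ℝ :=
  -∑ j, p j * Real.logb 2 (p j)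

lemma four_point {f : ℝ → ℝ} (hf : ConcaveOn ℝ (Set.Ici 0) f)
    {x y z w : ℝ} (hx : 0 ≤ x) (hw : 0 ≤ w)
    (hxy : x ≤ y) (hyw : y ≤ w) (hsum : x + w = y + z) :
    f x + f w ≤ f y + f z := by
  rcases eq_or_lt_of_le (hxy.trans hyw) with h | h
  · have hyx : y = x := le_antisymm (hyw.trans h.ge) hxy
    have hzw : z = w := by linarith
    rw [hyx, hzw]
  · set t := (y - x) / (w - x) with ht
    have hwx : w - x ≠ 0 := sub_ne_zero.2 h.ne'
    have key : t * (w - x) = y - x := div_mul_cancel₀ _ hwx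
    have ht0 : 0 ≤ t := div_nonneg (by linarith) (by linarith)
    have ht1 : t ≤ 1 := by
      rw [div_le_one (by linarith)]; linarith
    have h1 := hf.2 hx hw (by linarith : (0:ℝ) ≤ 1 - t) ht0 (by ring)
    have h2 := hf.2 hx hw ht0 (by linarith : (0:ℝ) ≤ 1 - t) (by ring)
    simp only [smul_eq_mul] at h1 h2
    have hy : (1 - t) * x + t * w = y := by linear_combination key
    have hz : t * x + (1 - t) * w = z := by linear_combination -key + hsum
    rw [hy] at h1; rw [hz] at h2
    linarith

lemma coord (u v a b c d : ℝ) (hu : 0 ≤ u) (hv : 0 ≤ v)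
    (hab : a ≤ b) (hcd : c ≤ d) (hbd : b ≤ d) (hac : a ≤ c)
    (habcd : a + d = b + c) (ha : 0 ≤ a) (hd1 : d ≤ 1) :
    Real.negMulLog (a * u + (1 - a) * v) + Real.negMulLog (d * u + (1 - d) * v) ≤
      Real.negMulLog (b * u + (1 - b) * v) + Real.negMulLog (c * u + (1 - c) * v) := by
  have hg : ∀ t : ℝ, 0 ≤ t → t ≤ 1 → 0 ≤ t * u + (1 - t) * v := by
    intro t ht0 ht1
    have := mul_nonneg ht0 hu
    have := mul_nonneg (by linarith : (0:ℝ) ≤ 1 - t) hv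
    linarith
  rcases le_total v u with huv | huv
  · have := four_point Real.concaveOn_negMulLog (z := c * u + (1 - c) * v)
      (hg a ha (by linarith)) (hg d (by linarith) hd1)
      (by nlinarith : a * u + (1 - a) * v ≤ b * u + (1 - b) * v)
      (by nlinarith : b * u + (1 - b) * v ≤ d * u + (1 - d) * v)
      (by linear_combination (u - v) * habcd)
    linarith
  · have := four_point Real.concaveOn_negMulLog (z := b * u + (1 - b) * v)
      (hg d (by linarith) hd1) (hg a ha (by linarith))
      (by nlinarith : d * u + (1 - d) * v ≤ c * u + (1 - c) * v)
      (by nlinarith : c * u + (1 - c) * v ≤ a * u + (1 - a) * v)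
      (by linear_combination (u - v) * habcd)
    linarith

lemma ent_eq {J : ℕ} (p : Fin J → ℝ) :
    ent p = (∑ j, Real.negMulLog (p j)) / Real.log 2 := by
  rw [ent, Finset.sum_div, ← Finset.sum_neg_distrib]
  refine Finset.sum_congr rfl fun j _ => ?_
  rw [Real.negMulLog, Real.logb]
  ring

theorem stmt2 (J : ℕ) (q0 q1 : Fin J → ℝ)
    (hq0_nonneg : ∀ j, 0 ≤ q0 j) (hq1_nonneg : ∀ j, 0 ≤ q1 j)
    (hq0_sum : ∑ j, q0 j = 1) (hq1_sum : ∑ j, q1 j = 1)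
    (Q1 Q2 Q3 Q4 : ℝ) (h1 : 0 ≤ Q1) (h2 : 0 ≤ Q2) (h3 : 0 ≤ Q3) (h4 : 0 ≤ Q4)
    (hsum : Q1 + Q2 + Q3 + Q4 = 1) :
    ent (fun j => Q1 * q0 j + (Q2 + Q3 + Q4) * q1 j) +
      ent (fun j => (Q1 + Q2 + Q3) * q0 j + Q4 * q1 j) ≤
    ent (fun j => (Q1 + Q2) * q0 j + (Q3 + Q4) * q1 j) +
      ent (fun j => (Q1 + Q3) * q0 j + (Q2 + Q4) * q1 j) := by
  simp only [ent_eq]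
  rw [← add_div, ← add_div, ← Finset.sum_add_distrib, ← Finset.sum_add_distrib]
  have hlog : (0:ℝ) < Real.log 2 := Real.log_pos (by norm_num)
  rw [div_le_div_iff_of_pos_right hlog]
  apply Finset.sum_le_sum
  intro j _
  have e1 : Q2 + Q3 + Q4 = 1 - Q1 := by linarith
  have e2 : Q4 = 1 - (Q1 + Q2 + Q3) := by linarith
  have e3 : Q3 + Q4 = 1 - (Q1 + Q2) := by linarith
  have e4 : Q2 + Q4 = 1 - (Q1 + Q3) := by linarith
  rw [e1, e3, e4, e2]
  exact coord (q0 j) (q1 j) Q1 (Q1 + Q2) (Q1 + Q3) (Q1 + Q2 + Q3)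
    (hq0_nonneg j) (hq1_nonneg j) (by linarith) (by linarith) (by linarith)
    (by linarith) (by ring) h1 (by linarith)
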